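/- With the notation of the Stokes multiplier theorem: the (i,j) block of the product S_β^{-1} S_{-β} equals δ_{ij}·1 - u_i T_{i+1} T_{i+2} ⋯ T_n v_j for all 1 ≤ i, j ≤ n, where for i = n the product T_{i+1}⋯T_n is the identity. Equivalently, (S_β^{-1} S_{-β})_{ij} = 1_{Φ_i}·δ_{ij} - U_i V_j. -/

import Mathlib

open scoped BigOperators

variable {k : Type*} [Field k] {n : ℕ} {Ψ : Type*}
  [AddCommGroup Ψ] [Module k Ψ] [FiniteDimensional k Ψ]
  {Φ : Fin n → Type*} [∀ i, AddCommGroup (Φ i)] [∀ i, Module k (Φ i)]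
  [∀ i, FiniteDimensional k (Φ i)]

/-- The ordered product (composition) of the endomorphisms `T l` for `l` running through the
finite set `s` in increasing order: for `s = {a₁ < a₂ < ⋯ < a_r}` this is `T a₁ ∘ T a₂ ∘ ⋯ ∘ T a_r`
(the identity if `s` is empty). -/
def orderedProd (T : Fin n → Module.End k Ψ) (s : Finset (Fin n)) : Module.End k Ψ :=
  ((s.sort (· ≤ ·)).map T).prod

/-- The local monodromies `T_i := 1 - v_i u_i` of the quiver `(Ψ, Φ_i, u_i, v_i)`. -/
def quiverT (u : ∀ i, Ψ →ₗ[k] Φ i) (v : ∀ i, Φ i →ₗ[k] Ψ) (i : Fin n) : Module.End k Ψ :=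
  1 - v i ∘ₗ u i

/-- The Stokes multiplier `S_β`: the block upper-unitriangular endomorphism of `⊕ᵢ Φᵢ` with
identity diagonal blocks and `(i,j)` block `u_i ∘ v_j` for `i < j`. -/
def Sbeta (u : ∀ i, Ψ →ₗ[k] Φ i) (v : ∀ i, Φ i →ₗ[k] Ψ) :
    Module.End k (∀ i, Φ i) :=
  LinearMap.pi fun i =>
    (LinearMap.proj i : (∀ i, Φ i) →ₗ[k] Φ i) +
      ∑ j, if i < j then (u i ∘ₗ v j) ∘ₗ (LinearMap.proj j) else 0

/-- The block upper-unitriangular endomorphism of `⊕ᵢ Φᵢ` with identity diagonal blocks and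
`(i,j)` block `-u_i T_{i+1} T_{i+2} ⋯ T_{j-1} v_j` for `i < j`. -/
def SbetaInv (u : ∀ i, Ψ →ₗ[k] Φ i) (v : ∀ i, Φ i →ₗ[k] Ψ) :
    Module.End k (∀ i, Φ i) :=
  LinearMap.pi fun i =>
    (LinearMap.proj i : (∀ i, Φ i) →ₗ[k] Φ i) -
      ∑ j, if i < j then
        (u i ∘ₗ (orderedProd (quiverT u v) (Finset.Ioo i j) : Ψ →ₗ[k] Ψ) ∘ₗ v j) ∘ₗ
          (LinearMap.proj j : (∀ l, Φ l) →ₗ[k] Φ j)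
      else 0


/-- The Stokes multiplier `S_{-β}`: the block lower-triangular endomorphism of `⊕ᵢ Φᵢ` with
diagonal blocks `𝕋_i = 1 - u_i v_i` and `(i,j)` block `-u_i ∘ v_j` for `i > j`. -/
def Sminus (u : ∀ i, Ψ →ₗ[k] Φ i) (v : ∀ i, Φ i →ₗ[k] Ψ) :
    Module.End k (∀ i, Φ i) :=
  LinearMap.pi fun i =>
    ((LinearMap.id - u i ∘ₗ v i) ∘ₗ (LinearMap.proj i : (∀ l, Φ l) →ₗ[k] Φ i)) -
      ∑ j, if j < i then (u i ∘ₗ v j) ∘ₗ (LinearMap.proj j : (∀ l, Φ l) →ₗ[k] Φ j) else 0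

/-- `U_i := u_i T_{i+1} T_{i+2} ⋯ T_n : Ψ → Φ_i`. -/
def Ucomp (u : ∀ i, Ψ →ₗ[k] Φ i) (v : ∀ i, Φ i →ₗ[k] Ψ) (i : Fin n) : Ψ →ₗ[k] Φ i :=
  u i ∘ₗ (orderedProd (quiverT u v) (Finset.Ioi i) : Ψ →ₗ[k] Ψ)

/-- `U_Σ = ᵗ(U_1, …, U_n) : Ψ → ⊕ᵢ Φᵢ`. -/
def USigma (u : ∀ i, Ψ →ₗ[k] Φ i) (v : ∀ i, Φ i →ₗ[k] Ψ) : Ψ →ₗ[k] (∀ i, Φ i) :=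
  LinearMap.pi fun i => Ucomp u v i

/-- `V_Σ = (v_1, …, v_n) : ⊕ᵢ Φᵢ → Ψ`. -/
def VSigma (v : ∀ i, Φ i →ₗ[k] Ψ) : (∀ i, Φ i) →ₗ[k] Ψ :=
  ∑ i, v i ∘ₗ (LinearMap.proj i : (∀ l, Φ l) →ₗ[k] Φ i)

set_option linter.unusedSectionVars false

section Helpers

variable (T : Fin n → Module.End k Ψ)

lemma orderedProd_empty : orderedProd T ∅ = 1 := by simp [orderedProd]

lemma orderedProd_insert_max {s : Finset (Fin n)} {a : Fin n} (h : ∀ b ∈ s, b < a) :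
    orderedProd T (insert a s) = orderedProd T s * T a := by
  have ha : a ∉ s := fun hs => lt_irrefl a (h a hs)
  have hsort : (insert a s).sort (· ≤ ·) = s.sort (· ≤ ·) ++ [a] := by
    have hperm : ((insert a s).sort (· ≤ ·)).Perm (s.sort (· ≤ ·) ++ [a]) :=
      (Finset.sort_perm_toList _ _).trans ((Finset.toList_insert ha).trans
        ((List.Perm.cons a (Finset.sort_perm_toList s (· ≤ ·)).symm).trans
          (List.perm_append_singleton a _).symm))
    refine List.Perm.eq_of_pairwise' (Finset.pairwise_sort _ _) ?_ hperm
    · refine List.pairwise_append.mpr ⟨Finset.pairwise_sort _ _, List.pairwise_singleton _ a, ?_⟩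
      intro x hx y hy
      rw [List.mem_singleton] at hy
      subst hy
      exact (h x ((Finset.mem_sort _).mp hx)).le
  rw [orderedProd, orderedProd, hsort, List.map_append, List.prod_append,
    List.map_singleton, List.prod_singleton]

def Pfun (i : Fin n) (b : ℕ) : Module.End k Ψ :=
  orderedProd T (Finset.univ.filter fun m => i < m ∧ m.val < b)

lemma Pfun_of_le {i : Fin n} {b : ℕ} (h : b ≤ i.val + 1) : Pfun T i b = 1 := by
  have hs : (Finset.univ.filter fun m : Fin n => i < m ∧ m.val < b) = ∅ := by
    ext m
    simp only [Finset.mem_filter, Finset.mem_univ, true_and, Finset.notMem_empty,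
      iff_false, not_and, Fin.lt_def]
    omega
  rw [Pfun, hs, orderedProd_empty]

lemma Pfun_succ_of_lt {i : Fin n} {b : ℕ} (h1 : i.val < b) (h2 : b < n) :
    Pfun T i (b + 1) = Pfun T i b * T ⟨b, h2⟩ := by
  have hset : (Finset.univ.filter fun m : Fin n => i < m ∧ m.val < b + 1)
      = insert ⟨b, h2⟩ (Finset.univ.filter fun m : Fin n => i < m ∧ m.val < b) := by
    ext m
    simp only [Finset.mem_filter, Finset.mem_univ, true_and, Finset.mem_insert,
      Fin.lt_def, Fin.ext_iff]
    omega
  rw [Pfun, hset, orderedProd_insert_max]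
  · rfl
  · intro m hm
    simp only [Finset.mem_filter] at hm
    exact Fin.lt_def.mpr hm.2.2

lemma Pfun_succ_of_not {i : Fin n} {b : ℕ} (h : ¬(i.val < b ∧ b < n)) :
    Pfun T i (b + 1) = Pfun T i b := by
  have hset : (Finset.univ.filter fun m : Fin n => i < m ∧ m.val < b + 1)
      = Finset.univ.filter fun m : Fin n => i < m ∧ m.val < b := by
    ext m
    have := m.isLt
    simp only [Finset.mem_filter, Finset.mem_univ, true_and, Fin.lt_def]
    omega
  rw [Pfun, hset]; rfl

lemma Pfun_tele (i : Fin n) (j : ℕ) (hj : i.val < j) (N : ℕ) (hN : j ≤ N) :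
    Pfun T i N = Pfun T i j -
      ∑ m ∈ Finset.univ.filter (fun m : Fin n => j ≤ m.val ∧ m.val < N),
        Pfun T i m.val * (1 - T m) := by
  induction N, hN using Nat.le_induction with
  | base =>
    have hs : (Finset.univ.filter fun m : Fin n => j ≤ m.val ∧ m.val < j) = ∅ := by
      ext m; simp only [Finset.mem_filter, Finset.mem_univ, true_and,
        Finset.notMem_empty, iff_false, not_and]; omega
    rw [hs, Finset.sum_empty, sub_zero]
  | succ N hN ih =>
    by_cases hn : N < n
    · have hiN : i.val < N := lt_of_lt_of_le hj hN
      have hset : (Finset.univ.filter fun m : Fin n => j ≤ m.val ∧ m.val < N + 1)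
          = insert ⟨N, hn⟩ (Finset.univ.filter fun m : Fin n => j ≤ m.val ∧ m.val < N) := by
        ext m
        simp only [Finset.mem_filter, Finset.mem_univ, true_and, Finset.mem_insert, Fin.ext_iff]
        omega
      have hmem : (⟨N, hn⟩ : Fin n) ∉
          Finset.univ.filter fun m : Fin n => j ≤ m.val ∧ m.val < N := by
        simp
      rw [Pfun_succ_of_lt T hiN hn, hset, Finset.sum_insert hmem, ih]
      noncomm_ring
    · have hset : (Finset.univ.filter fun m : Fin n => j ≤ m.val ∧ m.val < N + 1)
          = Finset.univ.filter fun m : Fin n => j ≤ m.val ∧ m.val < N := by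
        ext m
        have := m.isLt
        simp only [Finset.mem_filter, Finset.mem_univ, true_and]
        omega
      rw [Pfun_succ_of_not T (fun hc => hn hc.2), hset, ih]

lemma Pfun_Ioo (i j : Fin n) : orderedProd T (Finset.Ioo i j) = Pfun T i j.val := by
  rw [Pfun]
  congr 1
  ext m
  simp only [Finset.mem_Ioo, Finset.mem_filter, Finset.mem_univ, true_and, Fin.lt_def]

lemma Pfun_Ioi (i : Fin n) : orderedProd T (Finset.Ioi i) = Pfun T i n := by
  rw [Pfun]
  congr 1
  ext m
  simp only [Finset.mem_Ioi, Finset.mem_filter, Finset.mem_univ, true_and, and_iff_left m.isLt]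

end Helpers

section Apply
variable (u : ∀ i, Ψ →ₗ[k] Φ i) (v : ∀ i, Φ i →ₗ[k] Ψ)

lemma sum_single_support {N : Type*} [AddCommGroup N] [Module k N]
    (j : Fin n) (x : Φ j) (F : ∀ m, Φ m →ₗ[k] N) (c : Fin n → Prop) [DecidablePred c] :
    (∑ m, if c m then F m (Pi.single j x m) else 0) = if c j then F j x else 0 := by
  rw [Finset.sum_eq_single j]
  · rw [Pi.single_eq_same]
  · intro b _ hb
    rw [Pi.single_eq_of_ne hb, map_zero, ite_self]
  · intro h; exact absurd (Finset.mem_univ j) h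

lemma quiverT_apply (m : Fin n) (y : Ψ) : quiverT u v m y = y - v m (u m y) := rfl

lemma Sbeta_single (j : Fin n) (x : Φ j) (m : Fin n) :
    Sbeta u v (Pi.single j x) m =
      Pi.single j x m + if m < j then u m (v j x) else 0 := by
  simp only [Sbeta, LinearMap.pi_apply, LinearMap.add_apply, LinearMap.proj_apply,
    LinearMap.sum_apply]
  congr 1
  have h : ∀ m' : Fin n,
      (if m < m' then ((u m ∘ₗ v m') ∘ₗ LinearMap.proj m' : (∀ l, Φ l) →ₗ[k] Φ m) else 0)
          (Pi.single j x)
        = (if m < m' then ((u m ∘ₗ v m') : Φ m' →ₗ[k] Φ m) (Pi.single j x m') else 0) := by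
    intro m'; split <;> simp
  rw [Finset.sum_congr rfl fun m' _ => h m',
    sum_single_support j x (fun m' => ((u m ∘ₗ v m') : Φ m' →ₗ[k] Φ m)) (fun m' => m < m')]
  simp

lemma SbetaInv_apply (f : ∀ l, Φ l) (i : Fin n) :
    SbetaInv u v f i = f i - ∑ m, (if i < m then
      u i ((orderedProd (quiverT u v) (Finset.Ioo i m)) (v m (f m))) else 0) := by
  simp only [SbetaInv, LinearMap.pi_apply, LinearMap.sub_apply, LinearMap.sum_apply,
    LinearMap.proj_apply]
  congr 1
  refine Finset.sum_congr rfl fun m _ => ?_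
  split <;> simp

lemma Sminus_single (j : Fin n) (x : Φ j) (m : Fin n) :
    Sminus u v (Pi.single j x) m =
      Pi.single j (x - u j (v j x)) m - if j < m then u m (v j x) else 0 := by
  simp only [Sminus, LinearMap.pi_apply, LinearMap.sub_apply, LinearMap.sum_apply,
    LinearMap.comp_apply, LinearMap.proj_apply, LinearMap.id_apply]
  congr 1
  · rcases eq_or_ne m j with rfl | hmj
    · simp
    · simp [Pi.single_eq_of_ne hmj]
  · have h : ∀ m' : Fin n,
        (if m' < m then ((u m ∘ₗ v m') ∘ₗ LinearMap.proj m' : (∀ l, Φ l) →ₗ[k] Φ m) else 0)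
            (Pi.single j x)
          = (if m' < m then ((u m ∘ₗ v m') : Φ m' →ₗ[k] Φ m) (Pi.single j x m') else 0) := by
      intro m'; split <;> simp
    rw [Finset.sum_congr rfl fun m' _ => h m',
      sum_single_support j x (fun m' => ((u m ∘ₗ v m') : Φ m' →ₗ[k] Φ m)) (fun m' => m' < m)]
    simp


lemma tele_top (i : Fin n) (y : Ψ) :
    orderedProd (quiverT u v) (Finset.Ioi i) y =
      y - ∑ m ∈ Finset.univ.filter (fun m : Fin n => i < m),
        Pfun (quiverT u v) i m.val (y - quiverT u v m y) := by
  have h := Pfun_tele (quiverT u v) i (i.val + 1) (Nat.lt_succ_self _) n i.isLt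
  rw [Pfun_of_le _ (le_refl _)] at h
  have hset : (Finset.univ.filter fun m : Fin n => i.val + 1 ≤ m.val ∧ m.val < n)
      = Finset.univ.filter fun m : Fin n => i < m := by
    ext m
    have := m.isLt
    simp only [Finset.mem_filter, Finset.mem_univ, true_and, Fin.lt_def]
    omega
  rw [hset] at h
  have := DFunLike.congr_fun ((Pfun_Ioi (quiverT u v) i).trans h) y
  simpa only [LinearMap.sub_apply, Module.End.one_apply, LinearMap.coe_sum,
    Finset.sum_apply, Module.End.mul_apply] using this

lemma tele_mid (i j : Fin n) (hij : i < j) (y : Ψ) :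
    orderedProd (quiverT u v) (Finset.Ioi i) y =
      Pfun (quiverT u v) i j.val (quiverT u v j y) -
        ∑ m ∈ Finset.univ.filter (fun m : Fin n => j < m),
          Pfun (quiverT u v) i m.val (y - quiverT u v m y) := by
  have h := Pfun_tele (quiverT u v) i (j.val + 1) (Nat.lt_succ_of_lt hij) n j.isLt
  rw [Pfun_succ_of_lt (quiverT u v) hij j.isLt] at h
  have hset : (Finset.univ.filter fun m : Fin n => j.val + 1 ≤ m.val ∧ m.val < n)
      = Finset.univ.filter fun m : Fin n => j < m := by
    ext m
    have := m.isLt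
    simp only [Finset.mem_filter, Finset.mem_univ, true_and, Fin.lt_def]
    omega
  rw [hset] at h
  have := DFunLike.congr_fun ((Pfun_Ioi (quiverT u v) i).trans h) y
  simpa only [LinearMap.sub_apply, Module.End.one_apply, LinearMap.coe_sum,
    Finset.sum_apply, Module.End.mul_apply, Fin.eta] using this

lemma tele_Ioo (i j : Fin n) (hij : i < j) (y : Ψ) :
    Pfun (quiverT u v) i j.val y =
      y - ∑ m ∈ Finset.univ.filter (fun m : Fin n => i < m ∧ m < j),
        Pfun (quiverT u v) i m.val (y - quiverT u v m y) := by
  have h := Pfun_tele (quiverT u v) i (i.val + 1) (Nat.lt_succ_self _) j.val hij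
  rw [Pfun_of_le _ (le_refl _)] at h
  have hset : (Finset.univ.filter fun m : Fin n => i.val + 1 ≤ m.val ∧ m.val < j.val)
      = Finset.univ.filter fun m : Fin n => i < m ∧ m < j := by
    ext m
    simp only [Finset.mem_filter, Finset.mem_univ, true_and, Fin.lt_def]
    omega
  rw [hset] at h
  have := DFunLike.congr_fun h y
  simpa only [LinearMap.sub_apply, Module.End.one_apply, LinearMap.coe_sum,
    Finset.sum_apply, Module.End.mul_apply] using this


lemma SbetaInv_Sbeta_single (j : Fin n) (x : Φ j) (i : Fin n) :
    SbetaInv u v (Sbeta u v (Pi.single j x)) i = Pi.single j x i := by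
  set y := v j x with hy
  have hvu : ∀ m : Fin n, v m (u m y) = y - quiverT u v m y := by
    intro m; rw [quiverT_apply]; abel
  have hterm : ∀ m ∈ Finset.univ, (if i < m then
        u i ((orderedProd (quiverT u v) (Finset.Ioo i m)) (v m (Sbeta u v (Pi.single j x) m)))
      else 0)
      = (if i < m then
          ((u i ∘ₗ (Pfun (quiverT u v) i m.val : Ψ →ₗ[k] Ψ) ∘ₗ v m : Φ m →ₗ[k] Φ i))
            (Pi.single j x m) else 0)
        + (if i < m ∧ m < j then
            u i ((Pfun (quiverT u v) i m.val) (y - quiverT u v m y)) else 0) := by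
    intro m _
    rw [Sbeta_single, Pfun_Ioo]
    by_cases him : i < m
    · by_cases hmj : m < j
      · simp only [him, hmj, and_self, if_true, if_pos, LinearMap.comp_apply,
          LinearMap.coe_comp, Function.comp_apply, map_add, ← hy, hvu m]
      · simp only [him, hmj, and_false, if_true, if_false, if_pos, add_zero,
          LinearMap.comp_apply, LinearMap.coe_comp, Function.comp_apply, map_add, map_zero]
    · simp [him]
  rw [SbetaInv_apply, Finset.sum_congr rfl hterm, Finset.sum_add_distrib,
    sum_single_support j x _ (fun m => i < m), ← Finset.sum_filter, Sbeta_single]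
  by_cases hij : i < j
  · rw [if_pos hij, if_pos hij]
    simp only [LinearMap.coe_comp, Function.comp_apply, ← hy]
    rw [tele_Ioo u v i j hij y, map_sub, ← map_sum]
    abel
  · rw [if_neg hij, if_neg hij]
    have hempty : (Finset.univ.filter fun m : Fin n => i < m ∧ m < j) = ∅ := by
      ext m
      simp only [Finset.mem_filter, Finset.mem_univ, true_and, Finset.notMem_empty,
        iff_false, not_and]
      intro h1 h2; exact hij (h1.trans h2)
    rw [hempty, Finset.sum_empty]
    abel


lemma SbetaInv_mul_Sbeta : SbetaInv u v * Sbeta u v = 1 := by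
  refine LinearMap.pi_ext' fun j => LinearMap.ext fun x => funext fun i => ?_
  have hs : (LinearMap.single k Φ j) x = Pi.single j x := rfl
  simp only [LinearMap.comp_apply, Module.End.mul_apply, hs, Module.End.one_apply]
  exact SbetaInv_Sbeta_single u v j x i

lemma SbetaInv_Sminus_single (j : Fin n) (x : Φ j) (i : Fin n) :
    SbetaInv u v (Sminus u v (Pi.single j x)) i =
      Pi.single j x i - u i ((orderedProd (quiverT u v) (Finset.Ioi i)) (v j x)) := by
  set y := v j x with hy
  have hvu : ∀ m : Fin n, v m (u m y) = y - quiverT u v m y := by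
    intro m; rw [quiverT_apply]; abel
  have hterm : ∀ m ∈ Finset.univ, (if i < m then
        u i ((orderedProd (quiverT u v) (Finset.Ioo i m)) (v m (Sminus u v (Pi.single j x) m)))
      else 0)
      = (if i < m then
          ((u i ∘ₗ (Pfun (quiverT u v) i m.val : Ψ →ₗ[k] Ψ) ∘ₗ v m : Φ m →ₗ[k] Φ i))
            (Pi.single j (x - u j y) m) else 0)
        - (if i < m ∧ j < m then
            u i ((Pfun (quiverT u v) i m.val) (y - quiverT u v m y)) else 0) := by
    intro m _
    rw [Sminus_single, Pfun_Ioo]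
    by_cases him : i < m
    · by_cases hjm : j < m
      · simp only [him, hjm, and_self, if_true, if_pos, LinearMap.coe_comp,
          Function.comp_apply, map_sub, hvu m, ← hy]
      · simp only [him, hjm, and_false, if_true, if_false, if_pos, sub_zero,
          LinearMap.coe_comp, Function.comp_apply, map_sub, map_zero, ← hy]
    · simp [him]
  rw [SbetaInv_apply, Finset.sum_congr rfl hterm, Finset.sum_sub_distrib,
    sum_single_support j (x - u j y) _ (fun m => i < m), ← Finset.sum_filter, Sminus_single]
  rcases lt_trichotomy i j with hij | rfl | hji
  · rw [Pi.single_eq_of_ne (ne_of_lt hij), Pi.single_eq_of_ne (ne_of_lt hij),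
      if_neg (asymm hij), if_pos hij]
    have hvj : v j (x - u j y) = quiverT u v j y := by
      rw [map_sub, quiverT_apply, hy]
    have hset : (Finset.univ.filter fun m : Fin n => i < m ∧ j < m)
        = Finset.univ.filter fun m : Fin n => j < m := by
      ext m
      simp only [Finset.mem_filter, Finset.mem_univ, true_and, and_iff_right_iff_imp]
      exact fun h => hij.trans h
    rw [hset]
    simp only [LinearMap.coe_comp, Function.comp_apply, hvj]
    rw [tele_mid u v i j hij y, map_sub, ← map_sum]
    abel
  · rw [Pi.single_eq_same, Pi.single_eq_same, if_neg (lt_irrefl i), if_neg (lt_irrefl i)]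
    have hset : (Finset.univ.filter fun m : Fin n => i < m ∧ i < m)
        = Finset.univ.filter fun m : Fin n => i < m := by
      simp only [and_self]
    rw [hset, tele_top u v i y, map_sub, ← map_sum]
    abel
  · rw [Pi.single_eq_of_ne (ne_of_gt hji), Pi.single_eq_of_ne (ne_of_gt hji),
      if_pos hji, if_neg (asymm hji)]
    have hset : (Finset.univ.filter fun m : Fin n => i < m ∧ j < m)
        = Finset.univ.filter fun m : Fin n => i < m := by
      ext m
      simp only [Finset.mem_filter, Finset.mem_univ, true_and, and_iff_left_iff_imp]
      exact fun h => hji.trans h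
    rw [hset, tele_top u v i y, map_sub, ← map_sum]
    abel

end Apply

/-- The `(i,j)` block of `S_β⁻¹ S_{-β}` is `δ_{ij}·1 - U_i V_j`
(with `U_i = u_i T_{i+1} ⋯ T_n`, `V_j = v_j`): applying the composite to an element
supported in the `j`-th summand and projecting to the `i`-th summand gives
`δ_{ij} x - u_i (T_{i+1} ⋯ T_n (v_j x))`. -/
theorem stmt_3 (u : ∀ i, Ψ →ₗ[k] Φ i) (v : ∀ i, Φ i →ₗ[k] Ψ) :
    IsUnit (Sbeta u v) ∧
      ∀ (j : Fin n) (x : Φ j) (i : Fin n),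
        (Ring.inverse (Sbeta u v) * Sminus u v) (Pi.single j x) i =
          Pi.single j x i - u i ((orderedProd (quiverT u v) (Finset.Ioi i)) (v j x)) := by
  have hleft : SbetaInv u v * Sbeta u v = 1 := SbetaInv_mul_Sbeta u v
  have hinj : Function.Injective (Sbeta u v) := by
    have hL : Function.LeftInverse (SbetaInv u v) (Sbeta u v) := fun z => by
      rw [← Module.End.mul_apply, hleft, Module.End.one_apply]
    exact hL.injective
  have hsurj : Function.Surjective (Sbeta u v) :=
    (LinearMap.injective_iff_surjective).mp hinj
  have hunit : IsUnit (Sbeta u v) := (Module.End.isUnit_iff _).mpr ⟨hinj, hsurj⟩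
  have hinv : Ring.inverse (Sbeta u v) = SbetaInv u v := by
    calc Ring.inverse (Sbeta u v) = 1 * Ring.inverse (Sbeta u v) := (one_mul _).symm
      _ = (SbetaInv u v * Sbeta u v) * Ring.inverse (Sbeta u v) := by rw [hleft]
      _ = SbetaInv u v * (Sbeta u v * Ring.inverse (Sbeta u v)) := mul_assoc _ _ _
      _ = SbetaInv u v := by rw [Ring.mul_inverse_cancel _ hunit, mul_one]
  refine ⟨hunit, fun j x i => ?_⟩
  rw [hinv, Module.End.mul_apply]
  exact SbetaInv_Sminus_single u v j x i
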